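/- Let A be an n×n complex matrix such that every eigenvalue of A has negative real part, A + A* is negative semidefinite, and rank(A + A*) = 1. Let q be a stable complex polynomial of degree strictly less than n. Then the matrix q(−A)*q(−A) − q^♯(−A)*q^♯(−A) is positive semidefinite but singular (not invertible). -/

import Mathlib

open Matrix Polynomial
open scoped ComplexOrder

noncomputable def polySharp (p : Polynomial ℂ) : Polynomial ℂ :=
  (p.map (starRingEnd ℂ)).comp (-Polynomial.X)

lemma polySharp_mul (p q : ℂ[X]) : polySharp (p * q) = polySharp p * polySharp q := by
  simp [polySharp, Polynomial.map_mul, mul_comp]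

lemma polySharp_C (c : ℂ) : polySharp (C c) = C (starRingEnd ℂ c) := by
  simp [polySharp]

lemma polySharp_X_sub_C (r : ℂ) : polySharp (X - C r) = -X - C (starRingEnd ℂ r) := by
  simp [polySharp, sub_comp]

section
variable {m : Type*} [Fintype m] [DecidableEq m]

lemma psd_smul {c : ℂ} (hc : 0 ≤ c) {M : Matrix m m ℂ}
    (hM : M.PosSemidef) : (c • M).PosSemidef := by
  constructor
  · have hcr : star c = c := by
      rw [Complex.star_def, Complex.conj_eq_iff_im]
      exact ((Complex.nonneg_iff).mp hc).2.symm
    unfold Matrix.IsHermitian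
    rw [conjTranspose_smul, hcr, hM.1.eq]
  · intro x
    exact (hM.smul hc).2 x

lemma rank_smul_le (c : ℂ) (M : Matrix m m ℂ) : (c • M).rank ≤ M.rank := by
  have : c • M = (c • (1 : Matrix m m ℂ)) * M := by rw [smul_mul_assoc, one_mul]
  rw [this]; exact rank_mul_le_right _ _

omit [DecidableEq m] in
lemma rank_add_le' (M N : Matrix m m ℂ) : (M + N).rank ≤ M.rank + N.rank := by
  classical
  rw [Matrix.rank, Matrix.rank, Matrix.rank, Matrix.mulVecLin_add]
  have hle : LinearMap.range (M.mulVecLin + N.mulVecLin) ≤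
      LinearMap.range M.mulVecLin ⊔ LinearMap.range N.mulVecLin := by
    rintro y ⟨x, rfl⟩
    exact Submodule.mem_sup.mpr ⟨M.mulVecLin x, ⟨x, rfl⟩, N.mulVecLin x, ⟨x, rfl⟩, rfl⟩
  exact (Submodule.finrank_mono hle).trans
    (Submodule.finrank_add_le_finrank_add_finrank _ _)

lemma aeval_comm (B : Matrix m m ℂ) (p q : ℂ[X]) :
    aeval B p * aeval B q = aeval B q * aeval B p := by
  rw [← _root_.map_mul, ← _root_.map_mul, mul_comm]

lemma factor_identity (A : Matrix m m ℂ) (r : ℂ) :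
    (aeval (-A) (X - C r))ᴴ * (aeval (-A) (X - C r))
      = (aeval (-A) (polySharp (X - C r)))ᴴ * (aeval (-A) (polySharp (X - C r)))
        + (-(r + star r)) • (-(A + Aᴴ)) := by
  have hF : aeval (-A) (X - C r) = -A - r • 1 := by
    simp [map_sub, aeval_X, aeval_C, Algebra.algebraMap_eq_smul_one]
  have hG : aeval (-A) (polySharp (X - C r)) = A - (star r) • 1 := by
    rw [polySharp_X_sub_C]
    simp [map_sub, aeval_X, aeval_C, Algebra.algebraMap_eq_smul_one, Complex.star_def]
  rw [hF, hG]
  simp only [conjTranspose_sub, conjTranspose_neg, conjTranspose_smul, conjTranspose_one,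
    Complex.star_def, RingHom.id_apply, sub_mul, mul_sub, neg_mul, mul_neg,
    smul_mul_assoc, mul_smul_comm, smul_smul, one_mul, mul_one]
  simp only [RingHomCompTriple.comp_apply, RingHom.id_apply, Complex.star_def,
    RingHom.comp_apply, starRingEnd_self_apply]
  module

omit [DecidableEq m] in
lemma conj_swap (G P : Matrix m m ℂ) (h : P * G = G * P) (Y : Matrix m m ℂ) :
    Pᴴ * (Gᴴ * Y * G) * P = Gᴴ * (Pᴴ * Y * P) * G := by
  have h' : Gᴴ * Pᴴ = Pᴴ * Gᴴ := by
    rw [← conjTranspose_mul, ← conjTranspose_mul, h]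
  calc Pᴴ * (Gᴴ * Y * G) * P = (Pᴴ * Gᴴ) * Y * (G * P) := by simp only [mul_assoc]
    _ = (Gᴴ * Pᴴ) * Y * (P * G) := by rw [h', h]
    _ = Gᴴ * (Pᴴ * Y * P) * G := by simp only [mul_assoc]

/-- Main induction over the multiset of roots. -/
lemma key_induction (A : Matrix m m ℂ) (hdiss : (-(A + Aᴴ)).PosSemidef)
    (s : Multiset ℂ) (hs : ∀ r ∈ s, r.re < 0) :
    ((aeval (-A) ((s.map fun r => X - C r).prod))ᴴ *
        aeval (-A) ((s.map fun r => X - C r).prod) -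
      (aeval (-A) (polySharp ((s.map fun r => X - C r).prod)))ᴴ *
        aeval (-A) (polySharp ((s.map fun r => X - C r).prod))).PosSemidef ∧
    ((aeval (-A) ((s.map fun r => X - C r).prod))ᴴ *
        aeval (-A) ((s.map fun r => X - C r).prod) -
      (aeval (-A) (polySharp ((s.map fun r => X - C r).prod)))ᴴ *
        aeval (-A) (polySharp ((s.map fun r => X - C r).prod))).rank
      ≤ Multiset.card s * (-(A + Aᴴ)).rank := by
  induction s using Multiset.induction with
  | empty =>
      simp only [Multiset.map_zero, Multiset.prod_zero]
      have h1 : polySharp (1 : ℂ[X]) = 1 := by simp [polySharp]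
      rw [h1]
      simp only [_root_.map_one, conjTranspose_one, one_mul, sub_self]
      exact ⟨Matrix.PosSemidef.zero, by simp [Matrix.rank_zero]⟩
  | cons r t ih =>
      have hr : r.re < 0 := hs r (Multiset.mem_cons_self r t)
      have ht : ∀ x ∈ t, x.re < 0 := fun x hx => hs x (Multiset.mem_cons_of_mem hx)
      obtain ⟨ihP, ihR⟩ := ih ht
      set N : Matrix m m ℂ := -(A + Aᴴ) with hN
      set c : ℂ := -(r + star r) with hc
      set pP : ℂ[X] := (t.map fun x => X - C x).prod with hpP
      set P : Matrix m m ℂ := aeval (-A) pP with hP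
      set Q : Matrix m m ℂ := aeval (-A) (polySharp pP) with hQ
      set F : Matrix m m ℂ := aeval (-A) (X - C r) with hF
      set G : Matrix m m ℂ := aeval (-A) (polySharp (X - C r)) with hG
      have hprod : ((r ::ₘ t).map fun x => X - C x).prod = (X - C r) * pP := by
        rw [Multiset.map_cons, Multiset.prod_cons]
      have hPQcons :
          aeval (-A) (((r ::ₘ t).map fun x => X - C x).prod) = F * P ∧
          aeval (-A) (polySharp (((r ::ₘ t).map fun x => X - C x).prod)) = G * Q := by
        constructor
        · rw [hprod, _root_.map_mul]
        · rw [hprod, polySharp_mul, _root_.map_mul]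
      -- key algebraic identity
      have key : (F * P)ᴴ * (F * P) - (G * Q)ᴴ * (G * Q)
          = c • (Pᴴ * N * P) + Gᴴ * (Pᴴ * P - Qᴴ * Q) * G := by
        have hFF := factor_identity A r
        rw [← hF, ← hG, ← hN, ← hc] at hFF
        have hPG : P * G = G * P := aeval_comm (-A) _ _
        have hQG : Q * G = G * Q := aeval_comm (-A) _ _
        have e1 : (F * P)ᴴ * (F * P) = Pᴴ * (Fᴴ * F) * P := by
          rw [conjTranspose_mul]; simp only [mul_assoc]
        have e2 : (G * Q)ᴴ * (G * Q) = Qᴴ * (Gᴴ * G) * Q := by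
          rw [conjTranspose_mul]; simp only [mul_assoc]
        rw [e1, e2, hFF]
        have e3 : Pᴴ * (Gᴴ * G + c • N) * P
            = Pᴴ * (Gᴴ * G) * P + c • (Pᴴ * N * P) := by
          simp only [mul_add, add_mul, Matrix.mul_smul, Matrix.smul_mul]
        rw [e3]
        have e4 : Pᴴ * (Gᴴ * G) * P = Gᴴ * (Pᴴ * P) * G := by
          have := conj_swap G P hPG 1
          simpa using this
        have e5 : Qᴴ * (Gᴴ * G) * Q = Gᴴ * (Qᴴ * Q) * G := by
          have := conj_swap G Q hQG 1
          simpa using this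
        rw [e4, e5]
        simp only [mul_sub, sub_mul]
        abel
      rw [hPQcons.1, hPQcons.2, key]
      have hc0 : (0:ℂ) ≤ c := by
        have : c = Complex.ofReal (-(2 * r.re)) := by
          rw [hc]
          apply Complex.ext <;> simp [Complex.add_re, Complex.add_im] <;> ring
        rw [this]
        rw [Complex.zero_le_real]
        linarith
      have psd1 : (c • (Pᴴ * N * P)).PosSemidef :=
        psd_smul hc0 (hdiss.conjTranspose_mul_mul_same P)
      have psd2 : (Gᴴ * (Pᴴ * P - Qᴴ * Q) * G).PosSemidef :=
        ihP.conjTranspose_mul_mul_same G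
      refine ⟨psd1.add psd2, ?_⟩
      have b1 : (c • (Pᴴ * N * P)).rank ≤ N.rank := by
        refine (rank_smul_le _ _).trans ?_
        have : Pᴴ * N * P = Pᴴ * (N * P) := by rw [mul_assoc]
        rw [this]
        exact (rank_mul_le_right _ _).trans (rank_mul_le_left _ _)
      have b2 : (Gᴴ * (Pᴴ * P - Qᴴ * Q) * G).rank ≤ Multiset.card t * N.rank := by
        have : Gᴴ * (Pᴴ * P - Qᴴ * Q) * G = Gᴴ * ((Pᴴ * P - Qᴴ * Q) * G) := by
          rw [mul_assoc]
        rw [this]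
        exact (rank_mul_le_right _ _).trans ((rank_mul_le_left _ _).trans ihR)
      calc (c • (Pᴴ * N * P) + Gᴴ * (Pᴴ * P - Qᴴ * Q) * G).rank
          ≤ (c • (Pᴴ * N * P)).rank + (Gᴴ * (Pᴴ * P - Qᴴ * Q) * G).rank :=
            rank_add_le' _ _
        _ ≤ N.rank + Multiset.card t * N.rank := add_le_add b1 b2
        _ = Multiset.card (r ::ₘ t) * N.rank := by
            rw [Multiset.card_cons]; ring
end


theorem stmt_11 {n : ℕ}
    (A : Matrix (Fin n) (Fin n) ℂ)
    (hstab : ∀ z ∈ spectrum ℂ A, z.re < 0)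
    (hdiss : (-(A + Aᴴ)).PosSemidef)
    (hrank : (A + Aᴴ).rank = 1)
    (q : Polynomial ℂ) (hq : q ≠ 0)
    (hqstab : ∀ z ∈ q.roots, z.re < 0)
    (hqdeg : q.natDegree < n) :
    ((Polynomial.aeval (-A) q)ᴴ * Polynomial.aeval (-A) q -
        (Polynomial.aeval (-A) (polySharp q))ᴴ *
          Polynomial.aeval (-A) (polySharp q)).PosSemidef ∧
      ¬ IsUnit ((Polynomial.aeval (-A) q)ᴴ * Polynomial.aeval (-A) q -
        (Polynomial.aeval (-A) (polySharp q))ᴴ *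
          Polynomial.aeval (-A) (polySharp q)) := by
  have hsplit : Splits q := IsAlgClosed.splits q
  have hfact := (C_leadingCoeff_mul_prod_multiset_X_sub_C (splits_iff_card_roots.mp hsplit)).symm
  set c : ℂ := q.leadingCoeff with hcdef
  set s : Multiset ℂ := q.roots with hsdef
  set P : Matrix (Fin n) (Fin n) ℂ :=
    aeval (-A) ((s.map fun r => X - C r).prod) with hPdef
  set Q : Matrix (Fin n) (Fin n) ℂ :=
    aeval (-A) (polySharp ((s.map fun r => X - C r).prod)) with hQdef
  obtain ⟨kPSD, kR⟩ := key_induction A hdiss s hqstab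
  have hPe : aeval (-A) q = c • P := by
    conv_lhs => rw [hfact]
    rw [_root_.map_mul, aeval_C, Algebra.algebraMap_eq_smul_one, smul_mul_assoc, one_mul,
      hPdef]
  have hQe : aeval (-A) (polySharp q) = (star c) • Q := by
    conv_lhs => rw [hfact]
    rw [polySharp_mul, polySharp_C, _root_.map_mul, aeval_C,
      Algebra.algebraMap_eq_smul_one, smul_mul_assoc, one_mul, hQdef, Complex.star_def]
  have hM : (aeval (-A) q)ᴴ * aeval (-A) q -
      (aeval (-A) (polySharp q))ᴴ * aeval (-A) (polySharp q)
      = (star c * c) • (Pᴴ * P - Qᴴ * Q) := by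
    rw [hPe, hQe, conjTranspose_smul, conjTranspose_smul, smul_mul_assoc, smul_mul_assoc,
      mul_smul_comm, mul_smul_comm, smul_smul, smul_smul, star_star, smul_sub,
      mul_comm c (star c)]
  rw [hM]
  constructor
  · exact psd_smul (star_mul_self_nonneg c) kPSD
  · intro hunit
    have hrk := Matrix.rank_of_isUnit _ hunit
    have hNrank : (-(A + Aᴴ)).rank ≤ 1 := by
      have hneg : -(A + Aᴴ) = (((-1 : ℂ) • 1) : Matrix (Fin n) (Fin n) ℂ) * (A + Aᴴ) := by
        rw [smul_mul_assoc, one_mul, neg_one_smul]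
      rw [hneg, ← hrank]
      exact rank_mul_le_right _ _
    have hcard : Multiset.card s = q.natDegree :=
      (splits_iff_card_roots.mp hsplit)
    have hlt : ((star c * c) • (Pᴴ * P - Qᴴ * Q)).rank < n := by
      calc ((star c * c) • (Pᴴ * P - Qᴴ * Q)).rank
          ≤ (Pᴴ * P - Qᴴ * Q).rank := rank_smul_le _ _
        _ ≤ Multiset.card s * (-(A + Aᴴ)).rank := kR
        _ ≤ q.natDegree * 1 := by rw [hcard]; exact Nat.mul_le_mul_left _ hNrank
        _ < n := by simpa using hqdeg
    rw [hrk] at hlt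
    simp at hlt
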